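/- If G is a graph without isolated vertices, then γₜ(G) ≥ subₜ(G), where subₜ(G) is the smallest integer j such that the sum of the j largest vertex degrees of G is at least the order n of G. -/
import Mathlib


open SimpleGraph

/-- `S` is a total dominating set of `G`: every vertex has a neighbor in `S`. -/
def TotalDomSet {V : Type*} (G : SimpleGraph V) (S : Set V) : Prop :=
  ∀ v : V, ∃ w ∈ S, G.Adj v w

/-- The total domination number `γₜ(G)`. -/
noncomputable def totalDomNum {V : Type*} (G : SimpleGraph V) : ℕ :=
  sInf {m | ∃ S : Set V, TotalDomSet G S ∧ S.ncard = m}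
/-- The sub-total domination number: the least `j` such that the sum of the `j`
largest degrees of `G` is at least `n`. -/
noncomputable def subTotalDomNum {V : Type*} [Fintype V] (G : SimpleGraph V)
    [DecidableRel G.Adj] : ℕ :=
  sInf {j | ∃ A : Finset V, A.card = j ∧ Fintype.card V ≤ ∑ v ∈ A, G.degree v}

theorem totalDomNum_ge_subTotalDomNum {V : Type*} [Fintype V]
    (G : SimpleGraph V) [DecidableRel G.Adj] (hG : ∀ v : V, ∃ w : V, G.Adj v w) :
    subTotalDomNum G ≤ totalDomNum G := by
  classical
  have hne : {m | ∃ S : Set V, TotalDomSet G S ∧ S.ncard = m}.Nonempty := by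
    refine ⟨(Set.univ : Set V).ncard, Set.univ, ?_, rfl⟩
    intro v
    obtain ⟨w, hw⟩ := hG v
    exact ⟨w, Set.mem_univ w, hw⟩
  obtain ⟨S, hS, hcard⟩ := Nat.sInf_mem hne
  rw [totalDomNum, ← hcard]
  apply Nat.sInf_le
  refine ⟨S.toFinset, by simp [Set.ncard_eq_toFinset_card'], ?_⟩
  have hsub : (Finset.univ : Finset V) ⊆ S.toFinset.biUnion (fun w => G.neighborFinset w) := by
    intro v _
    obtain ⟨w, hwS, hadj⟩ := hS v
    exact Finset.mem_biUnion.2 ⟨w, Set.mem_toFinset.2 hwS, (G.mem_neighborFinset w v).2 hadj.symm⟩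
  calc Fintype.card V = (Finset.univ : Finset V).card := rfl
    _ ≤ (S.toFinset.biUnion (fun w => G.neighborFinset w)).card := Finset.card_le_card hsub
    _ ≤ ∑ w ∈ S.toFinset, (G.neighborFinset w).card := Finset.card_biUnion_le
    _ = ∑ w ∈ S.toFinset, G.degree w := by simp [SimpleGraph.card_neighborFinset_eq_degree]
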